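/- Let T be a tree of pathwidth at most p and let P be a path in T between a vertex in the first bag and a vertex in the last bag of a width-p path decomposition of T. Then every connected component of T − P has pathwidth at most p − 1 and is joined to P by exactly one edge. In particular every tree of pathwidth at most p admits a p-recursive path decomposition. -/

import Mathlib

/-- `X 0, ..., X (m-1)` is a path decomposition of `G`. -/
structure IsPathDecomp {V : Type} (G : SimpleGraph V) (m : ℕ) (X : Fin m → Finset V) :
    Prop where
  cover : ∀ v : V, ∃ i, v ∈ X i
  edges : ∀ u v : V, G.Adj u v → ∃ i, u ∈ X i ∧ v ∈ X i
  interval : ∀ v : V, ∀ i j k : Fin m, i ≤ j → j ≤ k → v ∈ X i → v ∈ X k → v ∈ X j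

/-- The pathwidth of a finite graph. -/
noncomputable def pathwidth {V : Type} [Fintype V] (G : SimpleGraph V) : ℕ :=
  sInf {w | ∃ m, ∃ X : Fin m → Finset V, IsPathDecomp G m X ∧ ∀ i, (X i).card ≤ w + 1}

/-- Leftness (all bags strictly before bag `i`) propagates along a walk avoiding bag `i`. -/
lemma left_prop {V : Type} {T : SimpleGraph V} {m : ℕ} {X : Fin m → Finset V}
    (hX : IsPathDecomp T m X) (i : Fin m) :
    ∀ {a b : V} (Q : T.Walk a b), (∀ w ∈ Q.support, w ∉ X i) →
      (∀ j, a ∈ X j → j < i) → ∀ j, b ∈ X j → j < i := by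
  intro a b Q
  induction Q with
  | nil => intro _ h; exact h
  | @cons a c b h q ih =>
    intro hsup ha
    refine ih ?_ ?_
    · intro w hw
      exact hsup w (by simp [SimpleGraph.Walk.support_cons, hw])
    · intro k hk
      by_contra hki
      push_neg at hki
      obtain ⟨j, hj1, hj2⟩ := hX.edges _ _ h
      have hc : c ∈ X i := hX.interval c j i k (le_of_lt (ha j hj1)) hki hj2 hk
      exact hsup c (by simp [SimpleGraph.Walk.support_cons,
        SimpleGraph.Walk.start_mem_support]) hc

/-- A walk from inside `C` to outside `C` crosses the boundary. -/
lemma boundary_edge {V : Type} [DecidableEq V] {T : SimpleGraph V} (C : Finset V) :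
    ∀ {a b : V} (Q : T.Walk a b), a ∈ C → b ∉ C →
      ∃ x y, x ∈ C ∧ y ∉ C ∧ T.Adj x y := by
  intro a b Q
  induction Q with
  | nil => intro ha hb; exact absurd ha hb
  | @cons a c b h q ih =>
    intro ha hb
    by_cases hc : c ∈ C
    · exact ih hc hb
    · exact ⟨a, c, ha, hc, h⟩

theorem components_after_removing_spine {V : Type} [Fintype V] [DecidableEq V]
    (T : SimpleGraph V) (hT : T.IsTree) (p m : ℕ) (hm : 0 < m)
    (X : Fin m → Finset V) (hX : IsPathDecomp T m X)
    (hwidth : ∀ i, (X i).card ≤ p + 1)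
    (u v : V) (hu : u ∈ X ⟨0, hm⟩) (hv : v ∈ X ⟨m - 1, Nat.sub_lt hm Nat.one_pos⟩)
    (P : T.Walk u v) (hP : P.IsPath)
    (C : Finset V) (hCne : C.Nonempty)
    (hCP : ∀ w ∈ C, w ∉ P.support)
    (hCconn : (T.induce (↑C : Set V)).Connected)
    (hCcomp : ∀ w ∈ C, ∀ z : V, T.Adj w z → z ∈ C ∨ z ∈ P.support) :
    pathwidth (T.induce (↑C : Set V)) < p ∧
      ∃! e : V × V, e.1 ∈ C ∧ e.2 ∈ P.support ∧ T.Adj e.1 e.2 := by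
  classical
  -- Key: every bag contains a vertex of the spine P.
  have key : ∀ i : Fin m, ∃ w ∈ P.support, w ∈ X i := by
    intro i
    by_contra hcon
    push_neg at hcon
    have hu' : ∀ j, u ∈ X j → j < i := by
      intro j hj
      by_contra hji
      push_neg at hji
      have : u ∈ X i := hX.interval u ⟨0, hm⟩ i j (by simp [Fin.le_def]) hji hu hj
      exact hcon u P.start_mem_support this
    have hv' := left_prop hX i P hcon hu' _ hv
    have h1 : m - 1 < (i : ℕ) := hv'
    have h2 : (i : ℕ) < m := i.isLt
    omega
  -- p is at least 1.
  have hp1 : 1 ≤ p := by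
    obtain ⟨w, hw⟩ := hCne
    obtain ⟨i, hwi⟩ := hX.cover w
    obtain ⟨z, hz, hzi⟩ := key i
    have hwz : w ≠ z := fun h => hCP w hw (h ▸ hz)
    have h2 : 1 < (X i).card := Finset.one_lt_card.mpr ⟨w, hwi, z, hzi, hwz⟩
    have := hwidth i
    omega
  constructor
  · -- pathwidth bound
    have hpw : pathwidth (T.induce (↑C : Set V)) ≤ p - 1 := by
      apply Nat.sInf_le
      refine ⟨m, fun i => (X i).subtype (fun x => x ∈ (↑C : Set V)), ⟨?_, ?_, ?_⟩, ?_⟩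
      · rintro ⟨w, hw⟩
        obtain ⟨i, hi⟩ := hX.cover w
        exact ⟨i, by simpa using hi⟩
      · rintro ⟨a, ha⟩ ⟨b, hb⟩ hab
        have hadj : T.Adj a b := by simpa using hab
        obtain ⟨i, h1, h2⟩ := hX.edges a b hadj
        exact ⟨i, by simpa using h1, by simpa using h2⟩
      · rintro ⟨w, hw⟩ i j k hij hjk h1 h2
        simp only [Finset.mem_subtype] at h1 h2 ⊢
        exact hX.interval w i j k hij hjk h1 h2
      · intro i
        obtain ⟨z, hz, hzi⟩ := key i
        rw [Finset.card_subtype]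
        have hsub : (X i).filter (fun x => x ∈ (↑C : Set V)) ⊆ (X i).erase z := by
          intro a ha
          simp only [Finset.mem_filter, Finset.mem_coe] at ha
          exact Finset.mem_erase.mpr ⟨fun h => hCP a ha.2 (h ▸ hz), ha.1⟩
        have h1 := Finset.card_le_card hsub
        have h2 := Finset.card_erase_of_mem hzi
        have h3 := hwidth i
        omega
    omega
  · -- unique boundary edge
    -- existence
    have huC : u ∉ C := fun h => hCP u h P.start_mem_support
    obtain ⟨w, hw⟩ := hCne
    obtain ⟨W⟩ := hT.isConnected.preconnected w u
    obtain ⟨x, y, hx, hy, hxy⟩ := boundary_edge C W hw huC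
    have hyP : y ∈ P.support := (hCcomp x hx y hxy).resolve_left hy
    -- uniqueness helper
    have uniq : ∀ x₁ y₁ x₂ y₂ : V, x₁ ∈ C → y₁ ∈ P.support → T.Adj x₁ y₁ →
        x₂ ∈ C → y₂ ∈ P.support → T.Adj x₂ y₂ → x₁ = x₂ ∧ y₁ = y₂ := by
      intro x₁ y₁ x₂ y₂ hx₁ hy₁ ha₁ hx₂ hy₂ ha₂
      -- path from x₁ to x₂ inside C
      obtain ⟨W0⟩ := hCconn.preconnected ⟨x₁, by simpa using hx₁⟩ ⟨x₂, by simpa using hx₂⟩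
      set W1 : T.Walk x₁ x₂ := W0.map (SimpleGraph.Embedding.induce (↑C : Set V)).toHom
        with hW1
      have hW1C : ∀ a ∈ W1.support, a ∈ C := by
        intro a ha
        replace ha : a ∈ (W0.map (SimpleGraph.Embedding.induce (↑C : Set V)).toHom).support := ha
        rw [SimpleGraph.Walk.support_map, List.mem_map] at ha
        obtain ⟨⟨b, hb⟩, _, rfl⟩ := ha
        simpa using hb
      set Q₁ : T.Walk x₁ x₂ := (W1.toPath : T.Walk x₁ x₂) with hQ₁
      have hQ₁path : Q₁.IsPath := W1.toPath.2
      have hQ₁C : ∀ a ∈ Q₁.support, a ∈ C :=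
        fun a ha => hW1C a (W1.support_toPath_subset ha)
      have hy₁Q : y₁ ∉ Q₁.support := fun h => hCP y₁ (hQ₁C y₁ h) hy₁
      have hy₂Q : y₂ ∉ Q₁.support := fun h => hCP y₂ (hQ₁C y₂ h) hy₂
      -- pathA : x₁ → y₂ through C
      set pA : T.Walk x₁ y₂ := Q₁.append (SimpleGraph.Walk.cons ha₂ SimpleGraph.Walk.nil)
        with hpA
      have hpAsup : pA.support = Q₁.support ++ [y₂] := by
        rw [hpA, SimpleGraph.Walk.support_append]
        simp
      have hpApath : pA.IsPath := by
        rw [SimpleGraph.Walk.isPath_def, hpAsup]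
        simp only [List.nodup_append, List.nodup_cons, List.nodup_nil, and_true]
        refine ⟨hQ₁path.support_nodup, by simp, fun a ha b hb hab => ?_⟩
        rw [List.mem_singleton] at hb
        exact hy₂Q (by rw [← hb, ← hab]; exact ha)
      by_cases hyy : y₁ = y₂
      · subst hyy
        constructor
        · -- show x₁ = x₂
          by_contra hne
          -- two paths from x₁ to y₁
          set pB : T.Walk x₁ y₁ := SimpleGraph.Walk.cons ha₁ SimpleGraph.Walk.nil with hpB
          have hpBpath : pB.IsPath := by
            rw [SimpleGraph.Walk.isPath_def, hpB]
            simp [ha₁.ne]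
          obtain ⟨q, _, hq⟩ := hT.existsUnique_path x₁ y₁
          have heq : pA = pB := (hq pA hpApath).trans (hq pB hpBpath).symm
          have hx₂A : x₂ ∈ pA.support := by
            rw [hpAsup]
            exact List.mem_append_left _ Q₁.end_mem_support
          rw [heq, hpB] at hx₂A
          simp only [SimpleGraph.Walk.support_cons, SimpleGraph.Walk.support_nil,
            List.mem_cons, List.mem_singleton] at hx₂A
          rcases hx₂A with h | h | h
          · exact hne h.symm
          · exact hCP x₂ hx₂ (h ▸ hy₁)
          · exact absurd h List.not_mem_nil
        · rfl
      · -- y₁ ≠ y₂ : contradiction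
        exfalso
        -- a path S from y₁ to y₂ inside P.support
        obtain ⟨S, hSpath, hSsub⟩ : ∃ S : T.Walk y₁ y₂, S.IsPath ∧
            ∀ a ∈ S.support, a ∈ P.support := by
          by_cases hy2d : y₂ ∈ (P.dropUntil y₁ hy₁).support
          · refine ⟨(P.dropUntil y₁ hy₁).takeUntil y₂ hy2d,
              (hP.dropUntil hy₁).takeUntil hy2d, fun a ha => ?_⟩
            exact P.support_dropUntil_subset hy₁
              (SimpleGraph.Walk.support_takeUntil_subset _ hy2d ha)
          · have hy2t : y₂ ∈ (P.takeUntil y₁ hy₁).support := by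
              have hspec := P.take_spec hy₁
              have : y₂ ∈ ((P.takeUntil y₁ hy₁).append (P.dropUntil y₁ hy₁)).support := by
                rw [hspec]; exact hy₂
              rw [SimpleGraph.Walk.support_append, List.mem_append] at this
              rcases this with h | h
              · exact h
              · exact absurd (List.mem_of_mem_tail h) hy2d
            have hy2r : y₂ ∈ (P.takeUntil y₁ hy₁).reverse.support := by
              rw [SimpleGraph.Walk.support_reverse, List.mem_reverse]; exact hy2t
            refine ⟨(P.takeUntil y₁ hy₁).reverse.takeUntil y₂ hy2r,
              ((hP.takeUntil hy₁).reverse).takeUntil hy2r, fun a ha => ?_⟩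
            have h1 := SimpleGraph.Walk.support_takeUntil_subset _ hy2r ha
            rw [SimpleGraph.Walk.support_reverse, List.mem_reverse] at h1
            exact P.support_takeUntil_subset hy₁ h1
        set pB : T.Walk x₁ y₂ := SimpleGraph.Walk.cons ha₁ S with hpB
        have hx₁S : x₁ ∉ S.support := fun h => hCP x₁ hx₁ (hSsub x₁ h)
        have hpBpath : pB.IsPath := by
          rw [hpB]
          exact hSpath.cons hx₁S
        obtain ⟨q, _, hq⟩ := hT.existsUnique_path x₁ y₂
        have heq : pA = pB := (hq pA hpApath).trans (hq pB hpBpath).symm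
        have hy₁B : y₁ ∈ pB.support := by
          rw [hpB, SimpleGraph.Walk.support_cons]
          exact List.mem_cons_of_mem _ S.start_mem_support
        rw [← heq, hpAsup, List.mem_append] at hy₁B
        rcases hy₁B with h | h
        · exact hy₁Q h
        · rw [List.mem_singleton] at h
          exact hyy h
    refine ⟨(x, y), ⟨hx, hyP, hxy⟩, ?_⟩
    rintro ⟨x', y'⟩ ⟨hx', hy', hxy'⟩
    obtain ⟨h1, h2⟩ := uniq x' y' x y hx' hy' hxy' hx hyP hxy
    simp [h1, h2]
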